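/- If -1 ≤ λ₁ ≤ 2, -1 ≤ λ₂ ≤ 2, and -2 ≤ λ₁ + λ₂ ≤ 1, then r(t) = (1 + λ₁) + 2(λ₂ - λ₁) t - 3λ₂ t² is nonnegative for all t ∈ [0,1]. -/
import Mathlib

theorem stmt_15 (l1 l2 : ℝ) (h1 : -1 ≤ l1) (h2 : l1 ≤ 2) (h3 : -1 ≤ l2) (h4 : l2 ≤ 2)
    (h5 : -2 ≤ l1 + l2) (h6 : l1 + l2 ≤ 1) :
    ∀ t ∈ Set.Icc (0:ℝ) 1, 0 ≤ (1 + l1) + 2 * (l2 - l1) * t - 3 * l2 * t ^ 2 := by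
  rintro t ⟨ht0, ht1⟩
  nlinarith [mul_nonneg ht0 (sub_nonneg.2 ht1), sq_nonneg t, sq_nonneg (1 - t),
    mul_nonneg (mul_nonneg ht0 ht0) (sub_nonneg.2 ht1),
    mul_nonneg (mul_nonneg ht0 (sub_nonneg.2 ht1)) (sub_nonneg.2 ht1),
    sq_nonneg (1 - 2*t), mul_nonneg ht0 ht0]
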